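/- Let A1 : D → S be an allotment that induces no negative loop, and let d ∈ D be a demand unit with A1(d) = s_j. Let A2 be the restriction of A1 to D ∖ {d} (so the occupancy of s_j decreases by one and every penalty transfer edge directed out of s_j decreases in weight, while transfer edges corresponding to d disappear). Among all loops of A2 that contain a penalty transfer edge directed out of s_j, let C_min be one of minimum cost. Then: (a) if cost(C_min) ≥ 0 (or no such loop exists), then A2 induces no negative loop; (b) if cost(C_min) < 0 and A3 is the allotment obtained from A2 by removing C_min, then A3 induces no negative loop. -/

import Mathlib

open Finset

/-- Cyclic successor on `Fin n`. -/
def cnext {n : ℕ} (t : Fin n) : Fin n := ⟨(t.val + 1) % n, Nat.mod_lt _ t.pos⟩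

section LBDD

variable {D S : Type*} [Fintype D] [DecidableEq D] [Fintype S] [DecidableEq S]

/-- Occupancy of a service center `s` under allotment `A`: the number of demand
units assigned to `s`. -/
def occ (A : D → S) (s : S) : ℕ := (Finset.univ.filter fun d => A d = s).card

/-- Total cost of an allotment: assignment costs plus accumulated per-allotment penalties. -/
def cost (CM : D → S → ℤ) (p : S → ℕ → ℤ) (A : D → S) : ℤ :=
  (∑ d, CM d (A d)) + ∑ s, ∑ j ∈ Finset.Icc 1 (occ A s), p s j

/-- Weight of the penalty transfer edge from `si` to `sj` under allotment `A`. -/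
def wpen (p : S → ℕ → ℤ) (A : D → S) (si sj : S) : ℤ :=
  p si (occ A si + 1) - p sj (occ A sj)

/-- A loop: a cyclic sequence of `m` edges; edge `t` is directed from `vtx t` to
`vtx (cnext t)`; if `dem t = some d` it is a transfer edge moving demand unit `d`,
and if `dem t = none` it is a penalty transfer edge. -/
structure Loop (S D : Type*) where
  m : ℕ
  vtx : Fin m → S
  dem : Fin m → Option D

/-- `L` is a loop of allotment `A`: at least two pairwise distinct service centers,
each transfer edge moves a demand unit currently assigned to its tail, the demand
units are pairwise distinct, and there is at most one penalty transfer edge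
(no penalty edge: type (i), a cycle of transfer edges; one penalty edge: type (ii),
a path of transfer edges closed by a penalty transfer edge). -/
def IsLoop (A : D → S) (L : Loop S D) : Prop :=
  2 ≤ L.m ∧ Function.Injective L.vtx ∧
  (∀ t d, L.dem t = some d → A d = L.vtx t) ∧
  (∀ t t' d, L.dem t = some d → L.dem t' = some d → t = t') ∧
  (∀ t t', L.dem t = none → L.dem t' = none → t = t')

/-- Weight of edge `t` of loop `L`. -/
def edgeWt (CM : D → S → ℤ) (p : S → ℕ → ℤ) (A : D → S) (L : Loop S D) (t : Fin L.m) : ℤ :=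
  match L.dem t with
  | some d => CM d (L.vtx (cnext t)) - CM d (L.vtx t)
  | none => wpen p A (L.vtx t) (L.vtx (cnext t))

/-- Cost of a loop: the sum of the weights of its edges. -/
def loopCost (CM : D → S → ℤ) (p : S → ℕ → ℤ) (A : D → S) (L : Loop S D) : ℤ :=
  ∑ t, edgeWt CM p A L t

/-- `A` induces a negative loop. -/
def InducesNegLoop (CM : D → S → ℤ) (p : S → ℕ → ℤ) (A : D → S) : Prop :=
  ∃ L : Loop S D, IsLoop A L ∧ loopCost CM p A L < 0

/-- Removing a loop from `A`: for each transfer edge, reassign its demand unit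
from the tail to the head of the edge. -/
noncomputable def removeLoop (A : D → S) (L : Loop S D) : D → S := fun x =>
  if h : ∃ t, L.dem t = some x then L.vtx (cnext (Classical.choose h)) else A x

end LBDD

set_option linter.unusedSectionVars false
section Aux1
variable {D S : Type*} [Fintype D] [DecidableEq D] [Fintype S] [DecidableEq S]

lemma cnext_surjective {m : ℕ} : Function.Surjective (cnext : Fin m → Fin m) := by
  rintro ⟨uv, hu⟩
  rcases Nat.eq_zero_or_pos uv with h0 | hpos
  · refine ⟨⟨m - 1, by omega⟩, ?_⟩
    apply Fin.ext
    show (m - 1 + 1) % m = uv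
    rw [(by omega : m - 1 + 1 = m), Nat.mod_self, h0]
  · refine ⟨⟨uv - 1, by omega⟩, ?_⟩
    apply Fin.ext
    show (uv - 1 + 1) % m = uv
    rw [(by omega : uv - 1 + 1 = uv), Nat.mod_eq_of_lt hu]

lemma cnext_injective {m : ℕ} : Function.Injective (cnext : Fin m → Fin m) :=
  Finite.injective_iff_surjective.mpr cnext_surjective

lemma cnext_ne {m : ℕ} (hm : 2 ≤ m) (t : Fin m) : cnext t ≠ t := by
  intro h
  have hv : (t.val + 1) % m = t.val := congrArg Fin.val h
  rcases Nat.lt_or_ge (t.val + 1) m with h1 | h1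
  · rw [Nat.mod_eq_of_lt h1] at hv; omega
  · have ht : t.val < m := t.isLt
    have : t.val + 1 = m := by omega
    rw [this, Nat.mod_self] at hv
    omega

lemma removeLoop_eq_of_dem {A : D → S} {L : Loop S D}
    (hdem : ∀ t t' x, L.dem t = some x → L.dem t' = some x → t = t')
    {t : Fin L.m} {x : D} (h : L.dem t = some x) :
    removeLoop A L x = L.vtx (cnext t) := by
  have hex : ∃ u, L.dem u = some x := ⟨t, h⟩
  rw [removeLoop, dif_pos hex]
  have : Classical.choose hex = t := hdem _ _ _ (Classical.choose_spec hex) h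
  rw [this]

lemma removeLoop_eq_of_not {A : D → S} {L : Loop S D} {x : D}
    (h : ∀ t, L.dem t ≠ some x) : removeLoop A L x = A x := by
  rw [removeLoop, dif_neg]
  rintro ⟨t, ht⟩
  exact h t ht

/-- transport sums over transfer-edge indices to sums over moved demand units -/
lemma sum_transfer_eq_sum_dems {M : Type*} [AddCommMonoid M] {L : Loop S D}
    (hdem : ∀ t t' x, L.dem t = some x → L.dem t' = some x → t = t')
    (f : Fin L.m → M) (g : D → M)
    (hfg : ∀ t x, L.dem t = some x → f t = g x) :
    ∑ t ∈ Finset.univ.filter (fun t => (L.dem t).isSome), f t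
      = ∑ x ∈ Finset.univ.filter (fun x => ∃ t, L.dem t = some x), g x := by
  classical
  apply Finset.sum_bij
    (i := fun t ht => (L.dem t).get (by simpa using (Finset.mem_filter.1 ht).2))
  · intro t ht
    have h1 : (L.dem t).isSome := by simpa using (Finset.mem_filter.1 ht).2
    simp only [Finset.mem_filter, Finset.mem_univ, true_and]
    exact ⟨t, (Option.some_get h1).symm⟩
  · intro t ht t' ht' h
    have h1 : (L.dem t).isSome := by simpa using (Finset.mem_filter.1 ht).2
    have h2 : (L.dem t').isSome := by simpa using (Finset.mem_filter.1 ht').2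
    refine hdem t t' ((L.dem t).get h1) (Option.some_get h1).symm ?_
    rw [show ((L.dem t).get h1) = _ from h]
    exact (Option.some_get h2).symm
  · intro x hx
    obtain ⟨t, ht⟩ := (Finset.mem_filter.1 hx).2
    refine ⟨t, Finset.mem_filter.2 ⟨Finset.mem_univ _, by simp [ht]⟩, ?_⟩
    simp [ht]
  · intro t ht
    have h1 : (L.dem t).isSome := by simpa using (Finset.mem_filter.1 ht).2
    exact hfg t _ (Option.some_get h1).symm

/-- master occupancy-change identity for loop removal -/
lemma occ_removeLoop (A : D → S) (L : Loop S D) (hL : IsLoop A L) (s : S) :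
    occ (removeLoop A L) s
      + ((Finset.univ.filter fun t => (L.dem t).isSome).filter fun t => L.vtx t = s).card
    = occ A s
      + ((Finset.univ.filter fun t => (L.dem t).isSome).filter fun t => L.vtx (cnext t) = s).card := by
  classical
  obtain ⟨hm, hinj, hass, hdem, hnone⟩ := hL
  set A' := removeLoop A L with hA'
  have hcard : ∀ C : D → S, occ C s = ∑ x, (if C x = s then (1:ℕ) else 0) := by
    intro C; rw [occ, Finset.card_filter]
  have houts : ((Finset.univ.filter fun t => (L.dem t).isSome).filter fun t => L.vtx t = s).card
      = ∑ x ∈ Finset.univ.filter (fun x => ∃ t, L.dem t = some x),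
          (if A x = s then (1:ℕ) else 0) := by
    rw [Finset.card_filter]
    exact sum_transfer_eq_sum_dems hdem (fun t => if L.vtx t = s then (1:ℕ) else 0)
      (fun x => if A x = s then (1:ℕ) else 0) (fun t x h => by
        show (if L.vtx t = s then (1:ℕ) else 0) = (if A x = s then (1:ℕ) else 0)
        rw [hass t x h])
  have hins : ((Finset.univ.filter fun t => (L.dem t).isSome).filter fun t => L.vtx (cnext t) = s).card
      = ∑ x ∈ Finset.univ.filter (fun x => ∃ t, L.dem t = some x),
          (if A' x = s then (1:ℕ) else 0) := by
    rw [Finset.card_filter]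
    exact sum_transfer_eq_sum_dems hdem (fun t => if L.vtx (cnext t) = s then (1:ℕ) else 0)
      (fun x => if A' x = s then (1:ℕ) else 0)
      (fun t x h => by
        show (if L.vtx (cnext t) = s then (1:ℕ) else 0) = (if A' x = s then (1:ℕ) else 0)
        rw [hA', removeLoop_eq_of_dem hdem h])
  have hsplit : ∀ C : D → S,
      occ C s = (∑ x ∈ Finset.univ.filter (fun x => ∃ t, L.dem t = some x),
          (if C x = s then (1:ℕ) else 0))
        + ∑ x ∈ Finset.univ.filter (fun x => ¬ ∃ t, L.dem t = some x),
          (if C x = s then (1:ℕ) else 0) := by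
    intro C
    rw [hcard C, Finset.sum_filter_add_sum_filter_not]
  have hoff : ∀ x ∈ Finset.univ.filter (fun x => ¬ ∃ t, L.dem t = some x),
      (if A' x = s then (1:ℕ) else 0) = (if A x = s then (1:ℕ) else 0) := by
    intro x hx
    have := (Finset.mem_filter.1 hx).2
    rw [hA', removeLoop_eq_of_not (by push_neg at this; exact fun t h => this t h)]
  rw [houts, hins, hsplit A', hsplit A, Finset.sum_congr rfl hoff]
  ring

theorem cost_removeLoop (CM : D → S → ℤ) (p : S → ℕ → ℤ) (A : D → S) (L : Loop S D)
    (hL : IsLoop A L) :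
    cost CM p (removeLoop A L) = cost CM p A + loopCost CM p A L := by
  classical
  obtain ⟨hm, hinj, hass, hdem, hnone⟩ := hL
  set A' := removeLoop A L with hA'
  set Tt : Finset (Fin L.m) := Finset.univ.filter (fun t => (L.dem t).isSome) with hTt
  -- CM part
  have hCM : ∑ x, CM x (A' x) = (∑ x, CM x (A x)) + ∑ t ∈ Tt, edgeWt CM p A L t := by
    have h1 : ∑ t ∈ Tt, edgeWt CM p A L t
        = ∑ x ∈ Finset.univ.filter (fun x => ∃ t, L.dem t = some x),
            (CM x (A' x) - CM x (A x)) := by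
      apply sum_transfer_eq_sum_dems hdem (fun t => edgeWt CM p A L t)
        (fun x => CM x (A' x) - CM x (A x))
      intro t x h
      show edgeWt CM p A L t = CM x (A' x) - CM x (A x)
      rw [hA', removeLoop_eq_of_dem hdem h, hass t x h, edgeWt, h]
    have h2 : ∀ C : D → S, ∑ x, CM x (C x)
        = (∑ x ∈ Finset.univ.filter (fun x => ∃ t, L.dem t = some x), CM x (C x))
          + ∑ x ∈ Finset.univ.filter (fun x => ¬ ∃ t, L.dem t = some x), CM x (C x) :=
      fun C => (Finset.sum_filter_add_sum_filter_not _ _ _).symm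
    have h3 : ∀ x ∈ Finset.univ.filter (fun x => ¬ ∃ t, L.dem t = some x),
        CM x (A' x) = CM x (A x) := by
      intro x hx
      have := (Finset.mem_filter.1 hx).2
      rw [hA', removeLoop_eq_of_not (by push_neg at this; exact fun t h => this t h)]
    rw [h1, h2 A', h2 A, Finset.sum_congr rfl h3, Finset.sum_sub_distrib]
    ring

  -- penalty part
  have hQsucc : ∀ (s : S) (n : ℕ), ∑ j ∈ Finset.Icc 1 (n+1), p s j
      = (∑ j ∈ Finset.Icc 1 n, p s j) + p s (n+1) := by
    intro s n
    rw [← Finset.sum_Icc_succ_top (by omega : 1 ≤ n + 1)]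
  by_cases hex : ∃ t0, L.dem t0 = none
  · obtain ⟨t0, ht0⟩ := hex
    have hsome : ∀ t, t ≠ t0 → (L.dem t).isSome := by
      intro t ht
      rcases h : L.dem t with _ | x
      · exact absurd (hnone t t0 h ht0) ht
      · rfl
    have hTte : Tt = Finset.univ.erase t0 := by
      ext t
      simp only [hTt, Finset.mem_filter, Finset.mem_univ, true_and, Finset.mem_erase, and_true]
      constructor
      · intro h ht; rw [ht, ht0] at h; exact absurd h (by simp)
      · exact hsome t
    set ct0 := cnext t0 with hct0
    have hct0ne : ct0 ≠ t0 := cnext_ne hm t0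
    have hvne : L.vtx t0 ≠ L.vtx ct0 := fun h => hct0ne (hinj h.symm)
    -- out/in counts
    have houts0 : (Tt.filter fun t => L.vtx t = L.vtx t0).card = 0 := by
      rw [Finset.card_eq_zero, Finset.filter_eq_empty_iff]
      intro t ht hv
      rw [hTte, Finset.mem_erase] at ht
      exact ht.1 (hinj hv)
    have hins0 : (Tt.filter fun t => L.vtx (cnext t) = L.vtx t0).card = 1 := by
      obtain ⟨cp, hcp⟩ := cnext_surjective t0
      have hcpne : cp ≠ t0 := fun h => (cnext_ne hm t0) (by rw [h] at hcp; exact hcp)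
      have : (Tt.filter fun t => L.vtx (cnext t) = L.vtx t0) = {cp} := by
        ext t
        simp only [Finset.mem_filter, Finset.mem_singleton, hTte, Finset.mem_erase,
          Finset.mem_univ, and_true]
        constructor
        · rintro ⟨-, hv⟩
          exact cnext_injective (by rw [hcp]; exact hinj hv)
        · rintro rfl
          exact ⟨hcpne, by rw [hcp]⟩
      rw [this, Finset.card_singleton]
    have houts1 : (Tt.filter fun t => L.vtx t = L.vtx ct0).card = 1 := by
      have : (Tt.filter fun t => L.vtx t = L.vtx ct0) = {ct0} := by
        ext t
        simp only [Finset.mem_filter, Finset.mem_singleton, hTte, Finset.mem_erase,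
          Finset.mem_univ, and_true]
        constructor
        · rintro ⟨-, hv⟩; exact hinj hv
        · rintro rfl; exact ⟨hct0ne, rfl⟩
      rw [this, Finset.card_singleton]
    have hins1 : (Tt.filter fun t => L.vtx (cnext t) = L.vtx ct0).card = 0 := by
      rw [Finset.card_eq_zero, Finset.filter_eq_empty_iff]
      intro t ht hv
      rw [hTte, Finset.mem_erase] at ht
      exact ht.1 (cnext_injective (hinj hv))
    have hgen : ∀ s, s ≠ L.vtx t0 → s ≠ L.vtx ct0 →
        (Tt.filter fun t => L.vtx (cnext t) = s).card
          = (Tt.filter fun t => L.vtx t = s).card := by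
      intro s hs1 hs2
      have e1 : (Tt.filter fun t => L.vtx t = s) = Finset.univ.filter fun t => L.vtx t = s := by
        rw [hTte]
        ext t
        simp only [Finset.mem_filter, Finset.mem_erase, Finset.mem_univ, true_and, and_true]
        constructor
        · exact fun h => h.2
        · intro h
          refine ⟨fun he => hs1 ?_, h⟩
          rw [← h, he]
      have e2 : (Tt.filter fun t => L.vtx (cnext t) = s)
          = Finset.univ.filter fun t => L.vtx (cnext t) = s := by
        rw [hTte]
        ext t
        simp only [Finset.mem_filter, Finset.mem_erase, Finset.mem_univ, true_and, and_true]
        constructor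
        · exact fun h => h.2
        · intro h
          refine ⟨fun he => hs2 ?_, h⟩
          rw [← h, he, hct0]
      rw [e1, e2]
      apply Finset.card_bij (fun t _ => cnext t)
      · intro t ht
        simp only [Finset.mem_filter, Finset.mem_univ, true_and] at ht ⊢
        exact ht
      · intro t _ t' _ h
        exact cnext_injective h
      · intro u hu
        obtain ⟨t, ht⟩ := cnext_surjective u
        refine ⟨t, ?_, ht⟩
        simp only [Finset.mem_filter, Finset.mem_univ, true_and] at hu ⊢
        rw [ht]
        exact hu
    have hocc1 : occ A' (L.vtx t0) = occ A (L.vtx t0) + 1 := by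
      have := occ_removeLoop A L ⟨hm, hinj, hass, hdem, hnone⟩ (L.vtx t0)
      rw [← hTt, ← hA'] at this
      rw [houts0, hins0] at this
      omega
    have hocc2 : occ A (L.vtx ct0) = occ A' (L.vtx ct0) + 1 := by
      have := occ_removeLoop A L ⟨hm, hinj, hass, hdem, hnone⟩ (L.vtx ct0)
      rw [← hTt, ← hA'] at this
      rw [houts1, hins1] at this
      omega
    have hocc3 : ∀ s, s ≠ L.vtx t0 → s ≠ L.vtx ct0 → occ A' s = occ A s := by
      intro s h1 h2
      have := occ_removeLoop A L ⟨hm, hinj, hass, hdem, hnone⟩ s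
      rw [← hTt, ← hA', hgen s h1 h2] at this
      omega
    -- penalty sums
    have hpen : ∑ s, ∑ j ∈ Finset.Icc 1 (occ A' s), p s j
        = (∑ s, ∑ j ∈ Finset.Icc 1 (occ A s), p s j)
          + wpen p A (L.vtx t0) (L.vtx ct0) := by
      have hdiff : ∀ s, (∑ j ∈ Finset.Icc 1 (occ A' s), p s j)
          - (∑ j ∈ Finset.Icc 1 (occ A s), p s j)
          = (if s = L.vtx t0 then p s (occ A (L.vtx t0) + 1) else 0)
            + (if s = L.vtx ct0 then -(p s (occ A (L.vtx ct0))) else 0) := by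
        intro s
        by_cases h1 : s = L.vtx t0
        · subst h1
          rw [if_pos rfl, if_neg hvne, hocc1, hQsucc]
          ring
        · by_cases h2 : s = L.vtx ct0
          · subst h2
            rw [if_neg h1, if_pos rfl, hocc2, hQsucc]
            ring
          · rw [if_neg h1, if_neg h2, hocc3 s h1 h2]
            ring
      have := Finset.sum_congr rfl (fun s (_ : s ∈ Finset.univ) => hdiff s)
      rw [Finset.sum_sub_distrib] at this
      rw [Finset.sum_add_distrib] at this
      rw [Finset.sum_ite_eq' Finset.univ (L.vtx t0), Finset.sum_ite_eq' Finset.univ (L.vtx ct0)] at this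
      simp only [Finset.mem_univ, if_pos] at this
      rw [wpen]
      linarith
    -- loop cost split
    have hsplitL : loopCost CM p A L = (∑ t ∈ Tt, edgeWt CM p A L t)
        + wpen p A (L.vtx t0) (L.vtx ct0) := by
      rw [loopCost, hTte, ← Finset.sum_erase_add Finset.univ _ (Finset.mem_univ t0)]
      congr 1
      rw [edgeWt, ht0]
    rw [cost, cost, hCM, hpen, hsplitL]
    ring
  · -- type (i): no penalty edge
    push_neg at hex
    have hTtu : Tt = Finset.univ := by
      ext t
      simp only [hTt, Finset.mem_filter, Finset.mem_univ, true_and, iff_true]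
      rcases h : L.dem t with _ | x
      · exact absurd h (hex t)
      · rfl
    have hgen : ∀ s, (Tt.filter fun t => L.vtx (cnext t) = s).card
        = (Tt.filter fun t => L.vtx t = s).card := by
      intro s
      rw [hTtu]
      apply Finset.card_bij (fun t _ => cnext t)
      · intro t ht
        simp only [Finset.mem_filter, Finset.mem_univ, true_and] at ht ⊢
        exact ht
      · intro t _ t' _ h
        exact cnext_injective h
      · intro u hu
        obtain ⟨t, ht⟩ := cnext_surjective u
        refine ⟨t, ?_, ht⟩
        simp only [Finset.mem_filter, Finset.mem_univ, true_and] at hu ⊢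
        rw [ht]
        exact hu
    have hocc : ∀ s, occ A' s = occ A s := by
      intro s
      have := occ_removeLoop A L ⟨hm, hinj, hass, hdem, hnone⟩ s
      rw [← hTt, ← hA', hgen s] at this
      omega
    have hlc : loopCost CM p A L = ∑ t ∈ Tt, edgeWt CM p A L t := by
      rw [loopCost, hTtu]
    rw [cost, cost, hCM, hlc]
    have : ∀ s, ∑ j ∈ Finset.Icc 1 (occ A' s), p s j = ∑ j ∈ Finset.Icc 1 (occ A s), p s j := by
      intro s; rw [hocc s]
    rw [Finset.sum_congr rfl (fun s _ => this s)]
    ring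

end Aux1


section Aux2
variable {D S : Type*} [Fintype D] [DecidableEq D] [Fintype S] [DecidableEq S]

lemma pMonotone {c : S → ℕ} {p : S → ℕ → ℤ}
    (hp0 : ∀ s j, j ≤ c s → p s j = 0)
    (hppos : ∀ s j, c s < j → 0 < p s j)
    (hpmono : ∀ s j, c s < j → p s j ≤ p s (j + 1)) (s : S) : Monotone (p s) := by
  apply monotone_nat_of_le_succ
  intro j
  rcases Nat.lt_or_ge (c s) j with h | h
  · exact hpmono s j h
  · rw [hp0 s j h]
    rcases Nat.lt_or_ge (c s) (j+1) with h2 | h2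
    · exact le_of_lt (hppos s (j+1) h2)
    · rw [hp0 s (j+1) h2]

lemma occ_restrict (A1 : D → S) (d : D) (sj : S) (hd : A1 d = sj) (s : S) :
    occ A1 s = occ (fun x : {x : D // x ≠ d} => A1 x.1) s + (if s = sj then 1 else 0) := by
  classical
  rw [occ, occ, Finset.card_filter, Finset.card_filter]
  rw [← Finset.sum_erase_add Finset.univ _ (Finset.mem_univ d)]
  congr 1
  · have h1 : ∀ x : D, x ∈ Finset.univ.erase d ↔ x ≠ d := by
      intro x; simp [Finset.mem_erase]
    rw [Finset.sum_subtype _ h1 (fun x => if A1 x = s then (1:ℕ) else 0)]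
  · rw [hd]
    by_cases h : s = sj
    · simp [h]
    · simp only [if_neg h, if_neg (fun he : sj = s => h he.symm)]

/-- Lift a loop on the restricted demand set to the full demand set. -/
def liftLoop (d : D) (L : Loop S {x : D // x ≠ d}) : Loop S D :=
  ⟨L.m, L.vtx, fun t => (L.dem t).map Subtype.val⟩

lemma isLoop_lift {A1 : D → S} {d : D} {L : Loop S {x : D // x ≠ d}}
    (hL : IsLoop (fun x : {x : D // x ≠ d} => A1 x.1) L) : IsLoop A1 (liftLoop d L) := by
  obtain ⟨hm, hinj, hass, hdem, hnone⟩ := hL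
  refine ⟨hm, hinj, ?_, ?_, ?_⟩
  · intro t y h
    rcases Option.map_eq_some_iff.1 h with ⟨x, hx, rfl⟩
    exact hass t x hx
  · intro t t' y h h'
    rcases Option.map_eq_some_iff.1 h with ⟨x, hx, hxy⟩
    rcases Option.map_eq_some_iff.1 h' with ⟨x', hx', hxy'⟩
    have hxx : x = x' := Subtype.ext (hxy.trans hxy'.symm)
    exact hdem t t' x hx (hxx ▸ hx')
  · intro t t' h h'
    exact hnone t t' (Option.map_eq_none_iff.1 h) (Option.map_eq_none_iff.1 h')

lemma loopCost_split (CM : D → S → ℤ) (p : S → ℕ → ℤ) (A : D → S) (L : Loop S D)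
    {t0 : Fin L.m} (h0 : L.dem t0 = none) :
    loopCost CM p A L = (∑ t ∈ Finset.univ.erase t0, edgeWt CM p A L t)
      + wpen p A (L.vtx t0) (L.vtx (cnext t0)) := by
  rw [loopCost, ← Finset.sum_erase_add Finset.univ _ (Finset.mem_univ t0)]
  congr 1
  rw [edgeWt, h0]

lemma edgeWt_lift_some (CM : D → S → ℤ) (p : S → ℕ → ℤ) (A1 : D → S) (d : D)
    {L : Loop S {x : D // x ≠ d}} {t : Fin L.m} {x : {x : D // x ≠ d}}
    (h : L.dem t = some x) :
    edgeWt CM p A1 (liftLoop d L) t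
      = edgeWt (fun (x : {x : D // x ≠ d}) s => CM x.1 s) p
          (fun x : {x : D // x ≠ d} => A1 x.1) L t := by
  simp only [edgeWt, liftLoop, h, Option.map_some]

lemma pf_nopen (CM : D → S → ℤ) (p : S → ℕ → ℤ) (A1 : D → S) (d : D)
    (hA1 : ¬ InducesNegLoop CM p A1)
    {L : Loop S {x : D // x ≠ d}}
    (hL : IsLoop (fun x : {x : D // x ≠ d} => A1 x.1) L)
    (hnp : ∀ t, L.dem t ≠ none) :
    0 ≤ loopCost (fun (x : {x : D // x ≠ d}) s => CM x.1 s) p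
        (fun x : {x : D // x ≠ d} => A1 x.1) L := by
  have hcost : loopCost CM p A1 (liftLoop d L)
      = loopCost (fun (x : {x : D // x ≠ d}) s => CM x.1 s) p
          (fun x : {x : D // x ≠ d} => A1 x.1) L := by
    apply Finset.sum_congr rfl
    intro t _
    rcases h : L.dem t with _ | x
    · exact absurd h (hnp t)
    · exact edgeWt_lift_some CM p A1 d h
  have := fun h => hA1 ⟨liftLoop d L, isLoop_lift hL, h⟩
  rw [hcost] at this
  exact not_lt.1 this

lemma pf_pen (CM : D → S → ℤ) (p : S → ℕ → ℤ) (A1 : D → S) (d : D) (sj : S)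
    (hd : A1 d = sj) (hmono : ∀ s, Monotone (p s))
    (hA1 : ¬ InducesNegLoop CM p A1)
    {L : Loop S {x : D // x ≠ d}}
    (hL : IsLoop (fun x : {x : D // x ≠ d} => A1 x.1) L)
    {t0 : Fin L.m} (h0 : L.dem t0 = none) :
    (L.vtx t0 ≠ sj → 0 ≤ loopCost (fun (x : {x : D // x ≠ d}) s => CM x.1 s) p
        (fun x : {x : D // x ≠ d} => A1 x.1) L) ∧
    (L.vtx t0 = sj → 0 ≤ loopCost (fun (x : {x : D // x ≠ d}) s => CM x.1 s) p
        (fun x : {x : D // x ≠ d} => A1 x.1) L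
        + p sj (occ (fun x : {x : D // x ≠ d} => A1 x.1) sj + 2)
        - p sj (occ (fun x : {x : D // x ≠ d} => A1 x.1) sj + 1)) := by
  classical
  obtain ⟨hm, hinj, hass, hdem, hnone⟩ := hL
  set A2 : {x : D // x ≠ d} → S := fun x => A1 x.1 with hA2
  set CM2 : {x : D // x ≠ d} → S → ℤ := fun x s => CM x.1 s with hCM2
  have h0' : (liftLoop d L).dem t0 = none := by
    simp only [liftLoop, h0, Option.map_none]
  have hsplit2 : loopCost CM2 p A2 L = (∑ t ∈ Finset.univ.erase t0, edgeWt CM2 p A2 L t)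
      + wpen p A2 (L.vtx t0) (L.vtx (cnext t0)) := loopCost_split CM2 p A2 L h0
  have hsplit1 : loopCost CM p A1 (liftLoop d L)
      = (∑ t ∈ Finset.univ.erase t0, edgeWt CM2 p A2 L t)
        + wpen p A1 (L.vtx t0) (L.vtx (cnext t0)) := by
    rw [loopCost_split CM p A1 (liftLoop d L) h0']
    congr 1
    apply Finset.sum_congr rfl
    intro t ht
    rcases h : L.dem t with _ | x
    · exact absurd (hnone t t0 h h0) (Finset.mem_erase.1 ht).1
    · exact edgeWt_lift_some CM p A1 d h
  have hnn : 0 ≤ loopCost CM p A1 (liftLoop d L) :=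
    not_lt.1 (fun h => hA1 ⟨liftLoop d L, isLoop_lift ⟨hm, hinj, hass, hdem, hnone⟩, h⟩)
  have hheadne : L.vtx (cnext t0) ≠ L.vtx t0 := fun h => (cnext_ne hm t0) (hinj h)
  have hocct : ∀ s, occ A1 s = occ A2 s + (if s = sj then 1 else 0) :=
    occ_restrict A1 d sj hd
  constructor
  · intro htail
    have hwle : wpen p A1 (L.vtx t0) (L.vtx (cnext t0))
        ≤ wpen p A2 (L.vtx t0) (L.vtx (cnext t0)) := by
      rw [wpen, wpen, hocct (L.vtx t0), hocct (L.vtx (cnext t0)), if_neg htail, add_zero]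
      have hmle : p (L.vtx (cnext t0)) (occ A2 (L.vtx (cnext t0)))
          ≤ p (L.vtx (cnext t0)) (occ A2 (L.vtx (cnext t0))
            + (if L.vtx (cnext t0) = sj then 1 else 0)) :=
        hmono _ (Nat.le_add_right _ _)
      linarith
    rw [hsplit1] at hnn
    rw [hsplit2]
    linarith
  · intro htail
    have hhead : L.vtx (cnext t0) ≠ sj := by
      rw [← htail]; exact hheadne
    have hwe : wpen p A1 (L.vtx t0) (L.vtx (cnext t0))
        = wpen p A2 (L.vtx t0) (L.vtx (cnext t0))
          + p sj (occ A2 sj + 2) - p sj (occ A2 sj + 1) := by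
      rw [wpen, wpen, hocct (L.vtx t0), hocct (L.vtx (cnext t0)), if_neg hhead, htail,
        if_pos rfl]
      have e2 : occ A2 sj + 1 + 1 = occ A2 sj + 2 := by omega
      rw [e2, add_zero]
      ring
    rw [hsplit2]
    rw [hsplit1, hwe] at hnn
    linarith

end Aux2


section Paths
variable {D S : Type*} [Fintype D] [DecidableEq D] [Fintype S] [DecidableEq S]

/-- minimal transfer-edge weight from `s` to `s'` (0 if no demand unit sits at `s`). -/
noncomputable def Tw (CM : D → S → ℤ) (A : D → S) (s s' : S) : ℤ :=
  if h : (Finset.univ.filter fun x => A x = s).Nonempty then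
    ((Finset.univ.filter fun x => A x = s).image fun x => CM x s' - CM x s).min'
      (h.image _)
  else 0

lemma Tw_le (CM : D → S → ℤ) (A : D → S) {s : S} (x : D) (hx : A x = s) (s' : S) :
    Tw CM A s s' ≤ CM x s' - CM x s := by
  have hne : (Finset.univ.filter fun y => A y = s).Nonempty := ⟨x, by simp [hx]⟩
  rw [Tw, dif_pos hne]
  exact Finset.min'_le _ _ (Finset.mem_image_of_mem _ (by simp [hx]))

lemma Tw_spec (CM : D → S → ℤ) (A : D → S) {s : S}
    (h : (Finset.univ.filter fun x => A x = s).Nonempty) (s' : S) :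
    ∃ x, A x = s ∧ Tw CM A s s' = CM x s' - CM x s := by
  rw [Tw, dif_pos h]
  have hm := Finset.min'_mem
    ((Finset.univ.filter fun x => A x = s).image fun x => CM x s' - CM x s) (h.image _)
  rcases Finset.mem_image.1 hm with ⟨x, hx, hv⟩
  exact ⟨x, by simpa using hx, hv.symm⟩

lemma Tw_self (CM : D → S → ℤ) (A : D → S) {s : S}
    (h : (Finset.univ.filter fun x => A x = s).Nonempty) : 0 ≤ Tw CM A s s := by
  obtain ⟨x, -, hv⟩ := Tw_spec CM A h s
  rw [hv]
  simp

/-- weight of the walk `a :: l` through transfer-min edges -/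
noncomputable def wT (CM : D → S → ℤ) (A : D → S) : S → List S → ℤ
  | _, [] => 0
  | a, b :: l => Tw CM A a b + wT CM A b l

/-- last vertex of the walk `a :: l` -/
def lastV : S → List S → S
  | a, [] => a
  | _, b :: l => lastV b l

/-- `n`-th vertex of the walk `a :: l` -/
def nthV : S → List S → ℕ → S
  | a, _, 0 => a
  | a, [], _ + 1 => a
  | _, b :: l, n + 1 => nthV b l n

@[simp] lemma nthV_zero (a : S) (l : List S) : nthV a l 0 = a := by cases l <;> rfl
@[simp] lemma nthV_succ (a b : S) (l : List S) (n : ℕ) :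
    nthV a (b :: l) (n + 1) = nthV b l n := rfl

lemma lastV_eq_nthV (a : S) (l : List S) : lastV a l = nthV a l l.length := by
  induction l generalizing a with
  | nil => rfl
  | cons b l ih => rw [lastV, List.length_cons, nthV_succ]; exact ih b

lemma nthV_mem (a : S) (l : List S) (n : ℕ) : nthV a l n ∈ a :: l := by
  induction l generalizing a n with
  | nil => cases n <;> simp [nthV]
  | cons b l ih =>
    cases n with
    | zero => simp
    | succ n => exact List.mem_cons_of_mem _ (ih b n)

lemma nthV_mem_dropLast (a : S) (l : List S) {n : ℕ} (h : n < l.length) :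
    nthV a l n ∈ (a :: l).dropLast := by
  induction l generalizing a n with
  | nil => simp at h
  | cons b l ih =>
    rw [List.dropLast_cons₂]
    cases n with
    | zero => simp
    | succ n =>
      rw [nthV_succ]
      exact List.mem_cons_of_mem _ (ih b (by simpa using h))

lemma nthV_eq_get (a : S) (l : List S) {n : ℕ} (h : n < l.length + 1) :
    nthV a l n = (a :: l).get ⟨n, by simpa using h⟩ := by
  induction l generalizing a n with
  | nil =>
    have hn : n = 0 := by simp at h; omega
    subst hn
    rfl
  | cons b l ih =>
    cases n with
    | zero => rfl
    | succ n => exact ih b (by simpa using h)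

lemma nthV_inj (a : S) (l : List S) (hnd : (a :: l).Nodup) {i j : ℕ}
    (hi : i < l.length + 1) (hj : j < l.length + 1)
    (h : nthV a l i = nthV a l j) : i = j := by
  rw [nthV_eq_get a l hi, nthV_eq_get a l hj] at h
  have := List.nodup_iff_injective_get.1 hnd h
  exact Fin.val_eq_of_eq this

lemma wT_eq_sum (CM : D → S → ℤ) (A : D → S) (a : S) (l : List S) :
    wT CM A a l = ∑ i : Fin l.length, Tw CM A (nthV a l i.val) (nthV a l (i.val + 1)) := by
  induction l generalizing a with
  | nil => simp [wT]
  | cons b l ih =>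
    rw [wT, List.length_cons, Fin.sum_univ_succ, ih b]
    congr 1
    simp

lemma wT_concat (CM : D → S → ℤ) (A : D → S) (a s' : S) (l : List S) :
    wT CM A a (l ++ [s']) = wT CM A a l + Tw CM A (lastV a l) s' := by
  induction l generalizing a with
  | nil => simp [wT, lastV]
  | cons b l ih => rw [List.cons_append, wT, wT, ih b, lastV]; ring

lemma wT_append_cons (CM : D → S → ℤ) (A : D → S) (a s' : S) (l₁ l₂ : List S) :
    wT CM A a (l₁ ++ s' :: l₂) = wT CM A a (l₁ ++ [s']) + wT CM A s' l₂ := by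
  induction l₁ generalizing a with
  | nil => simp [wT]
  | cons b l₁ ih => rw [List.cons_append, wT, ih b, List.cons_append, wT]; ring

lemma lastV_append_cons (a s' : S) (l₁ l₂ : List S) :
    lastV a (l₁ ++ s' :: l₂) = lastV s' l₂ := by
  induction l₁ generalizing a with
  | nil => rfl
  | cons b l₁ ih => rw [List.cons_append, lastV]; exact ih b

lemma lastV_concat (a s' : S) (l : List S) : lastV a (l ++ [s']) = s' := by
  rw [lastV_append_cons]; rfl

/-- build a type-(i) loop from a closed transfer walk -/
lemma exists_cycle_loop (CM : D → S → ℤ) (p : S → ℕ → ℤ) (A : D → S) (a : S) (l : List S)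
    (hnd : (a :: l).Nodup) (hne : l ≠ [])
    (hocc : ∀ b ∈ a :: l, (Finset.univ.filter fun x => A x = b).Nonempty) :
    ∃ L : Loop S D, IsLoop A L ∧ (∀ t, L.dem t ≠ none) ∧
      loopCost CM p A L = wT CM A a l + Tw CM A (lastV a l) a := by
  classical
  set k := l.length with hk
  have hk1 : 1 ≤ k := by
    rw [hk]; cases l with
    | nil => exact absurd rfl hne
    | cons b l => simp
  set v : Fin (k + 1) → S := fun i => nthV a l i.val with hv
  have hvinj : Function.Injective v := fun i j h =>
    Fin.ext (nthV_inj a l hnd i.isLt j.isLt h)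
  have hch : ∀ i : Fin (k + 1), ∃ x, A x = v i
      ∧ Tw CM A (v i) (v (cnext i)) = CM x (v (cnext i)) - CM x (v i) :=
    fun i => Tw_spec CM A (hocc _ (nthV_mem a l i.val)) _
  choose xx hxx1 hxx2 using hch
  set L : Loop S D := ⟨k + 1, v, fun i => some (xx i)⟩ with hL
  have hdemL : ∀ i : Fin (k + 1), L.dem i = some (xx i) := fun i => rfl
  have hvL : ∀ i : Fin (k + 1), L.vtx i = v i := fun i => rfl
  refine ⟨L, ⟨by show 2 ≤ k + 1; omega, hvinj, ?_, ?_, ?_⟩, ?_, ?_⟩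
  · intro t y h
    have h' : some (xx t) = some y := h
    rw [← Option.some_inj.1 h']
    exact hxx1 t
  · intro t t' y h h'
    have h1 : xx t = y := Option.some_inj.1 h
    have h2 : xx t' = y := Option.some_inj.1 h'
    exact hvinj (by rw [← hxx1 t, ← hxx1 t', h1, h2])
  · intro t t' h h'
    exact absurd (hdemL t ▸ h) (by simp)
  · intro t h
    exact absurd (hdemL t ▸ h) (by simp)
  · show ∑ i : Fin (k + 1), edgeWt CM p A L i = _
    have hedge : ∀ i : Fin (k + 1), edgeWt CM p A L i = Tw CM A (v i) (v (cnext i)) := by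
      intro i
      rw [edgeWt, hdemL i, hxx2 i]
    rw [Finset.sum_congr rfl (fun i _ => hedge i), Fin.sum_univ_castSucc]
    congr 1
    · rw [wT_eq_sum CM A a l]
      apply Finset.sum_congr rfl
      intro i _
      have h2 : (cnext (i.castSucc : Fin (k+1)) : Fin (k+1)).val = i.val + 1 := by
        show ((i.castSucc : Fin (k+1)).val + 1) % (k + 1) = i.val + 1
        have hi := i.isLt
        have hcv : (i.castSucc : Fin (k+1)).val = i.val := rfl
        rw [hcv]
        exact Nat.mod_eq_of_lt (by omega)
      show Tw CM A (nthV a l (i.castSucc : Fin (k+1)).val)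
          (nthV a l (cnext (i.castSucc : Fin (k+1)) : Fin (k+1)).val) = _
      rw [h2]
      rfl
    · have h2 : (cnext (Fin.last k) : Fin (k+1)).val = 0 := Nat.mod_self _
      have h3 : v (Fin.last k) = lastV a l := by
        rw [lastV_eq_nthV]
        rfl
      have h4 : v (cnext (Fin.last k)) = a := by
        show nthV a l (cnext (Fin.last k) : Fin (k+1)).val = a
        rw [h2]
        exact nthV_zero a l
      rw [h3, h4]

/-- build a type-(ii) loop from a transfer walk closed by a penalty edge -/
lemma exists_path_loop (CM : D → S → ℤ) (p : S → ℕ → ℤ) (A : D → S) (a : S) (l : List S)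
    (hnd : (a :: l).Nodup) (hne : l ≠ [])
    (hocc : ∀ n : ℕ, n < l.length → (Finset.univ.filter fun x => A x = nthV a l n).Nonempty) :
    ∃ L : Loop S D, IsLoop A L ∧
      (∃ t0 : Fin L.m, L.dem t0 = none ∧ L.vtx t0 = lastV a l ∧ L.vtx (cnext t0) = a) ∧
      loopCost CM p A L = wT CM A a l + wpen p A (lastV a l) a := by
  classical
  set k := l.length with hk
  have hk1 : 1 ≤ k := by
    rw [hk]; cases l with
    | nil => exact absurd rfl hne
    | cons b l => simp
  set v : Fin (k + 1) → S := fun i => nthV a l i.val with hv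
  have hvinj : Function.Injective v := fun i j h =>
    Fin.ext (nthV_inj a l hnd i.isLt j.isLt h)
  have hch : ∀ i : Fin k, ∃ x, A x = v i.castSucc
      ∧ Tw CM A (v i.castSucc) (v (cnext i.castSucc))
        = CM x (v (cnext i.castSucc)) - CM x (v i.castSucc) :=
    fun i => Tw_spec CM A (hocc i.val i.isLt) _
  choose xx hxx1 hxx2 using hch
  set dm : Fin (k + 1) → Option D := fun i =>
    if h : i.val < k then some (xx ⟨i.val, h⟩) else none with hdm
  have hdm_lt : ∀ (i : Fin (k + 1)) (h : i.val < k), dm i = some (xx ⟨i.val, h⟩) :=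
    fun i h => dif_pos h
  have hdm_last : dm (Fin.last k) = none := dif_neg (by simp)
  have hlast_of : ∀ t : Fin (k + 1), ¬ t.val < k → t = Fin.last k := by
    intro t h
    apply Fin.ext
    show t.val = k
    have := t.isLt
    omega
  have hcast : ∀ (i : Fin (k + 1)) (h : i.val < k), ((⟨i.val, h⟩ : Fin k).castSucc : Fin (k+1)) = i :=
    fun i h => Fin.ext rfl
  set L : Loop S D := ⟨k + 1, v, dm⟩ with hL
  have hdemL : ∀ i : Fin (k + 1), L.dem i = dm i := fun i => rfl
  refine ⟨L, ⟨by show 2 ≤ k + 1; omega, hvinj, ?_, ?_, ?_⟩, ⟨Fin.last k, hdm_last, ?_, ?_⟩, ?_⟩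
  · intro t y h
    have h' : dm t = some y := h
    by_cases hlt : t.val < k
    · rw [hdm_lt t hlt] at h'
      have := hxx1 ⟨t.val, hlt⟩
      rw [hcast t hlt] at this
      rw [← Option.some_inj.1 h']
      exact this
    · rw [hlast_of t hlt, hdm_last] at h'
      exact absurd h' (by simp)
  · intro t t' y h h'
    have h1 : dm t = some y := h
    have h2 : dm t' = some y := h'
    by_cases hlt : t.val < k
    · by_cases hlt' : t'.val < k
      · rw [hdm_lt t hlt] at h1
        rw [hdm_lt t' hlt'] at h2
        have hxy : xx ⟨t.val, hlt⟩ = xx ⟨t'.val, hlt'⟩ := by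
          rw [Option.some_inj.1 h1, Option.some_inj.1 h2]
        have hvv : v ((⟨t.val, hlt⟩ : Fin k).castSucc) = v ((⟨t'.val, hlt'⟩ : Fin k).castSucc) := by
          rw [← hxx1, ← hxx1, hxy]
        have := hvinj hvv
        rw [hcast, hcast] at this
        exact this
      · rw [hlast_of t' hlt', hdm_last] at h2
        exact absurd h2 (by simp)
    · rw [hlast_of t hlt, hdm_last] at h1
      exact absurd h1 (by simp)
  · intro t t' h h'
    have h1 : dm t = none := h
    have h2 : dm t' = none := h'
    by_cases hlt : t.val < k
    · rw [hdm_lt t hlt] at h1; exact absurd h1 (by simp)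
    · by_cases hlt' : t'.val < k
      · rw [hdm_lt t' hlt'] at h2; exact absurd h2 (by simp)
      · rw [hlast_of t hlt, hlast_of t' hlt']
  · show v (Fin.last k) = lastV a l
    rw [lastV_eq_nthV]
    rfl
  · show v (cnext (Fin.last k)) = a
    have h2 : (cnext (Fin.last k) : Fin (k+1)).val = 0 := Nat.mod_self _
    show nthV a l (cnext (Fin.last k) : Fin (k+1)).val = a
    rw [h2]
    exact nthV_zero a l
  · show ∑ i : Fin (k + 1), edgeWt CM p A L i = _
    rw [Fin.sum_univ_castSucc]
    congr 1
    · rw [wT_eq_sum CM A a l]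
      apply Finset.sum_congr rfl
      intro i _
      have hlt : ((i.castSucc : Fin (k+1))).val < k := i.isLt
      have hii : (⟨(i.castSucc : Fin (k+1)).val, hlt⟩ : Fin k) = i := Fin.ext rfl
      have hedge : edgeWt CM p A L i.castSucc
          = CM (xx i) (v (cnext i.castSucc)) - CM (xx i) (v i.castSucc) := by
        rw [edgeWt, hdemL, hdm_lt i.castSucc hlt, hii]
      rw [hedge, ← hxx2 i]
      have h2 : (cnext (i.castSucc : Fin (k+1)) : Fin (k+1)).val = i.val + 1 := by
        show ((i.castSucc : Fin (k+1)).val + 1) % (k + 1) = i.val + 1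
        have hi := i.isLt
        have hcv : (i.castSucc : Fin (k+1)).val = i.val := rfl
        rw [hcv]
        exact Nat.mod_eq_of_lt (by omega)
      show Tw CM A (nthV a l (i.castSucc : Fin (k+1)).val)
          (nthV a l (cnext (i.castSucc : Fin (k+1)) : Fin (k+1)).val) = _
      rw [h2]
      rfl
    · have hedge : edgeWt CM p A L (Fin.last k)
          = wpen p A (v (Fin.last k)) (v (cnext (Fin.last k))) := by
        rw [edgeWt, hdemL, hdm_last]
      rw [hedge]
      have h3 : v (Fin.last k) = lastV a l := by
        rw [lastV_eq_nthV]
        rfl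
      have h2 : (cnext (Fin.last k) : Fin (k+1)).val = 0 := Nat.mod_self _
      have h4 : v (cnext (Fin.last k)) = a := by
        show nthV a l (cnext (Fin.last k) : Fin (k+1)).val = a
        rw [h2]
        exact nthV_zero a l
      rw [h3, h4]

end Paths


section Mu
variable {D S : Type*} [Fintype D] [DecidableEq D] [Fintype S] [DecidableEq S]

/-- the finset of all duplicate-free lists over a finite type -/
noncomputable def nodupLists (S : Type*) [Fintype S] [DecidableEq S] : Finset (List S) :=
  Finset.univ.powerset.biUnion fun t => t.toList.permutations.toFinset

lemma mem_nodupLists {l : List S} (h : l.Nodup) : l ∈ nodupLists S := by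
  classical
  apply Finset.mem_biUnion.2
  refine ⟨l.toFinset, Finset.mem_powerset.2 (Finset.subset_univ _), ?_⟩
  rw [List.mem_toFinset, List.mem_permutations]
  exact (List.toFinset_toList h).symm

lemma lastV_eq_getLast (a : S) (l : List S) :
    lastV a l = (a :: l).getLast (List.cons_ne_nil a l) := by
  induction l generalizing a with
  | nil => rfl
  | cons b l ih => rw [lastV, List.getLast_cons (List.cons_ne_nil b l)]; exact ih b

lemma mu_exists (CM : D → S → ℤ) (A : D → S) (p : S → ℕ → ℤ) (sj : S) (w : ℤ)
    (hC0 : ∀ (a : S) (l : List S), (a :: l).Nodup →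
      (∀ b ∈ a :: l, (Finset.univ.filter fun x => A x = b).Nonempty) →
      0 ≤ wT CM A a l + Tw CM A (lastV a l) a)
    (hC1 : ∀ (a : S) (l : List S), (a :: l).Nodup →
      (∀ b ∈ (a :: l).dropLast, (Finset.univ.filter fun x => A x = b).Nonempty) →
      lastV a l ≠ sj →
      0 ≤ wT CM A a l + p (lastV a l) (occ A (lastV a l) + 1) - p a (occ A a))
    (hC2 : ∀ (a : S) (l : List S), (a :: l).Nodup →
      (∀ b ∈ (a :: l).dropLast, (Finset.univ.filter fun x => A x = b).Nonempty) →
      lastV a l = sj →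
      w ≤ wT CM A a l + p sj (occ A sj + 1) - p a (occ A a))
    (hC3 : ∀ (a : S) (l : List S), (a :: l).Nodup →
      (∀ b ∈ (a :: l).dropLast, (Finset.univ.filter fun x => A x = b).Nonempty) →
      lastV a l = sj →
      0 ≤ wT CM A a l + p sj (occ A sj + 2) - p a (occ A a)) :
    ∃ μ : S → ℤ,
      (∀ s, μ s ≤ - p s (occ A s)) ∧
      (∀ s, s ≠ sj → 0 ≤ p s (occ A s + 1) + μ s) ∧
      (w ≤ p sj (occ A sj + 1) + μ sj) ∧
      (0 ≤ p sj (occ A sj + 2) + μ sj) ∧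
      (∀ s s', (Finset.univ.filter fun x => A x = s).Nonempty → μ s' ≤ μ s + Tw CM A s s') := by
  classical
  set Cand : S → Finset (S × List S) := fun s =>
    (Finset.univ ×ˢ nodupLists S).filter fun q =>
      (q.1 :: q.2).Nodup ∧
      (∀ b ∈ (q.1 :: q.2).dropLast, (Finset.univ.filter fun x => A x = b).Nonempty) ∧
      lastV q.1 q.2 = s with hCand
  have hmemC : ∀ (s : S) (a : S) (l : List S), (a :: l).Nodup →
      (∀ b ∈ (a :: l).dropLast, (Finset.univ.filter fun x => A x = b).Nonempty) →
      lastV a l = s → (a, l) ∈ Cand s := by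
    intro s a l hnd hok hlast
    rw [hCand]
    refine Finset.mem_filter.2 ⟨Finset.mem_product.2 ⟨Finset.mem_univ _, ?_⟩, hnd, hok, hlast⟩
    exact mem_nodupLists (List.Nodup.of_cons hnd)
  have hneC : ∀ s : S, ((Cand s).image fun q => wT CM A q.1 q.2 - p q.1 (occ A q.1)).Nonempty := by
    intro s
    refine ⟨wT CM A s [] - p s (occ A s), Finset.mem_image.2 ⟨(s, []), ?_, rfl⟩⟩
    exact hmemC s s [] (by simp) (by simp) rfl
  set μ : S → ℤ := fun s =>
    ((Cand s).image fun q => wT CM A q.1 q.2 - p q.1 (occ A q.1)).min' (hneC s) with hμ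
  have hμle : ∀ (s : S) (a : S) (l : List S), (a :: l).Nodup →
      (∀ b ∈ (a :: l).dropLast, (Finset.univ.filter fun x => A x = b).Nonempty) →
      lastV a l = s → μ s ≤ wT CM A a l - p a (occ A a) := by
    intro s a l hnd hok hlast
    exact Finset.min'_le _ _ (Finset.mem_image.2 ⟨(a, l), hmemC s a l hnd hok hlast, rfl⟩)
  have hμspec : ∀ s : S, ∃ (a : S) (l : List S), (a :: l).Nodup ∧
      (∀ b ∈ (a :: l).dropLast, (Finset.univ.filter fun x => A x = b).Nonempty) ∧
      lastV a l = s ∧ μ s = wT CM A a l - p a (occ A a) := by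
    intro s
    have := Finset.min'_mem _ (hneC s)
    rcases Finset.mem_image.1 this with ⟨q, hq, hv⟩
    rw [hCand] at hq
    rcases Finset.mem_filter.1 hq with ⟨-, hnd, hok, hlast⟩
    exact ⟨q.1, q.2, hnd, hok, hlast, hv.symm⟩
  have hM1 : ∀ s, μ s ≤ - p s (occ A s) := by
    intro s
    have := hμle s s [] (by simp) (by simp) rfl
    simpa [wT] using this
  refine ⟨μ, hM1, ?_, ?_, ?_, ?_⟩
  · intro s hs
    obtain ⟨a, l, hnd, hok, hlast, heq⟩ := hμspec s
    have := hC1 a l hnd hok (by rw [hlast]; exact hs)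
    rw [hlast] at this
    linarith
  · obtain ⟨a, l, hnd, hok, hlast, heq⟩ := hμspec sj
    have := hC2 a l hnd hok hlast
    linarith
  · obtain ⟨a, l, hnd, hok, hlast, heq⟩ := hμspec sj
    have := hC3 a l hnd hok hlast
    linarith
  · intro s s' hsocc
    obtain ⟨a, l, hnd, hok, hlast, heq⟩ := hμspec s
    have hallocc : ∀ b ∈ a :: l, (Finset.univ.filter fun x => A x = b).Nonempty := by
      intro b hb
      rw [← List.dropLast_append_getLast (List.cons_ne_nil a l)] at hb
      rcases List.mem_append.1 hb with hb | hb
      · exact hok b hb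
      · have : b = lastV a l := by
          rw [lastV_eq_getLast]
          simpa using hb
        rw [this, hlast]
        exact hsocc
    by_cases hmem : s' ∈ a :: l
    · obtain ⟨pre, suf, hsplit⟩ := List.append_of_mem hmem
      cases pre with
      | nil =>
        rw [List.nil_append] at hsplit
        injection hsplit with ha hl
        have hcyc := hC0 a l hnd hallocc
        rw [hlast] at hcyc
        rw [← ha]
        linarith [hM1 a]
      | cons a0 pre' =>
        rw [List.cons_append] at hsplit
        injection hsplit with ha hl
        have hnd' : ((a :: pre') ++ (s' :: suf)).Nodup := by
          rw [List.cons_append, ← hl]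
          exact hnd
        have hnd1 : ((a :: pre') ++ [s']).Nodup :=
          List.Nodup.sublist
            (List.Sublist.append_left (List.cons_sublist_cons.2 (List.nil_sublist suf)) (a :: pre'))
            hnd'
        have hok1 : ∀ b ∈ (a :: (pre' ++ [s'])).dropLast,
            (Finset.univ.filter fun x => A x = b).Nonempty := by
          intro b hb
          rw [show a :: (pre' ++ [s']) = (a :: pre') ++ [s'] from rfl,
            List.dropLast_concat] at hb
          apply hallocc
          rcases List.mem_cons.1 hb with hb | hb
          · rw [hb]; exact List.mem_cons_self (a := a) (l := l)
          · rw [hl]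
            exact List.mem_cons_of_mem a (List.mem_append.2 (Or.inl hb))
        have h1 : μ s' ≤ wT CM A a (pre' ++ [s']) - p a (occ A a) :=
          hμle s' a (pre' ++ [s'])
            (by rw [show a :: (pre' ++ [s']) = (a :: pre') ++ [s'] from rfl]; exact hnd1)
            hok1 (lastV_concat a s' pre')
        have hnd2 : (s' :: suf).Nodup :=
          List.Nodup.sublist (List.sublist_append_right (a :: pre') (s' :: suf)) hnd'
        have hocc2 : ∀ b ∈ s' :: suf, (Finset.univ.filter fun x => A x = b).Nonempty := by
          intro b hb
          apply hallocc
          rw [hl]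
          exact List.mem_cons_of_mem a (List.mem_append.2 (Or.inr hb))
        have hcyc := hC0 s' suf hnd2 hocc2
        have hlast2 : lastV s' suf = s := by
          rw [hl, lastV_append_cons] at hlast
          exact hlast
        rw [hlast2] at hcyc
        have hsum : wT CM A a l = wT CM A a (pre' ++ [s']) + wT CM A s' suf := by
          rw [hl, wT_append_cons]
        linarith
    · -- s' not on the optimal walk: extend it
      have hdisj : List.Disjoint (a :: l) [s'] := by
        intro x hx hx'
        rw [List.mem_singleton] at hx'
        rw [hx'] at hx
        exact hmem hx
      have hnd1 : ((a :: l) ++ [s']).Nodup :=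
        List.Nodup.append hnd (List.nodup_singleton s') hdisj
      have hok1 : ∀ b ∈ (a :: (l ++ [s'])).dropLast,
          (Finset.univ.filter fun x => A x = b).Nonempty := by
        intro b hb
        rw [show a :: (l ++ [s']) = (a :: l) ++ [s'] from rfl, List.dropLast_concat] at hb
        exact hallocc b hb
      have h1 : μ s' ≤ wT CM A a (l ++ [s']) - p a (occ A a) :=
        hμle s' a (l ++ [s']) (by rw [show a :: (l ++ [s']) = (a :: l) ++ [s'] from rfl]; exact hnd1)
          hok1 (lastV_concat a s' l)
      have h2 : wT CM A a (l ++ [s']) = wT CM A a l + Tw CM A s s' := by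
        rw [wT_concat, hlast]
      linarith

end Mu


section Assembly
variable {D S : Type*} [Fintype D] [DecidableEq D] [Fintype S] [DecidableEq S]

lemma sum_Ioc_ge (p : S → ℕ → ℤ) (hmono : ∀ s, Monotone (p s)) (s : S) (m n : ℕ) (h : m ≤ n) :
    ((n - m : ℕ) : ℤ) * p s (m + 1) ≤ ∑ j ∈ Finset.Ioc m n, p s j := by
  have := Finset.card_nsmul_le_sum (Finset.Ioc m n) (fun j => p s j) (p s (m + 1))
    (fun j hj => hmono s (by rcases Finset.mem_Ioc.1 hj with ⟨h1, h2⟩; omega))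
  rwa [Nat.card_Ioc, nsmul_eq_mul] at this

lemma sum_Ioc_le (p : S → ℕ → ℤ) (hmono : ∀ s, Monotone (p s)) (s : S) (m n : ℕ) (h : m ≤ n) :
    ∑ j ∈ Finset.Ioc m n, p s j ≤ ((n - m : ℕ) : ℤ) * p s n := by
  have := Finset.sum_le_card_nsmul (Finset.Ioc m n) (fun j => p s j) (p s n)
    (fun j hj => hmono s (Finset.mem_Ioc.1 hj).2)
  rwa [Nat.card_Ioc, nsmul_eq_mul] at this

lemma Q_diff (p : S → ℕ → ℤ) (s : S) (m n : ℕ) (h : m ≤ n) :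
    ∑ j ∈ Finset.Icc 1 n, p s j
      = (∑ j ∈ Finset.Icc 1 m, p s j) + ∑ j ∈ Finset.Ioc m n, p s j := by
  rw [← Finset.sum_union]
  · congr 1
    ext j
    simp only [Finset.mem_union, Finset.mem_Icc, Finset.mem_Ioc]
    omega
  · rw [Finset.disjoint_left]
    intro j hj hj'
    rw [Finset.mem_Icc] at hj
    rw [Finset.mem_Ioc] at hj'
    omega

lemma sum_Ioc_step (p : S → ℕ → ℤ) (s : S) (m n : ℕ) (h : m < n) :
    ∑ j ∈ Finset.Ioc m n, p s j = p s (m + 1) + ∑ j ∈ Finset.Ioc (m + 1) n, p s j := by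
  have hmem : m + 1 ∈ Finset.Ioc m n := Finset.mem_Ioc.2 ⟨by omega, by omega⟩
  rw [← Finset.sum_erase_add _ _ hmem]
  have : (Finset.Ioc m n).erase (m + 1) = Finset.Ioc (m + 1) n := by
    ext j
    simp only [Finset.mem_erase, Finset.mem_Ioc]
    omega
  rw [this]
  ring

lemma cost_lower (CM : D → S → ℤ) (A : D → S) (p : S → ℕ → ℤ) (sj : S) (w : ℤ)
    (hw0 : w ≤ 0) (hmono : ∀ s, Monotone (p s)) (μ : S → ℤ)
    (hM1 : ∀ s, μ s ≤ - p s (occ A s))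
    (hM2 : ∀ s, s ≠ sj → 0 ≤ p s (occ A s + 1) + μ s)
    (hM2b : w ≤ p sj (occ A sj + 1) + μ sj)
    (hM2c : 0 ≤ p sj (occ A sj + 2) + μ sj)
    (hM3 : ∀ s s', (Finset.univ.filter fun x => A x = s).Nonempty → μ s' ≤ μ s + Tw CM A s s')
    (B : D → S) :
    cost CM p A + w ≤ cost CM p B := by
  classical
  have hx : ∀ x, CM x (A x) + μ (B x) - μ (A x) ≤ CM x (B x) := by
    intro x
    have h1 : Tw CM A (A x) (B x) ≤ CM x (B x) - CM x (A x) := Tw_le CM A x rfl (B x)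
    have h2 : μ (B x) ≤ μ (A x) + Tw CM A (A x) (B x) := hM3 _ _ ⟨x, by simp⟩
    linarith
  have hsum1 : (∑ x, CM x (A x)) + (∑ x, μ (B x)) - (∑ x, μ (A x)) ≤ ∑ x, CM x (B x) := by
    have := Finset.sum_le_sum (fun x (_ : x ∈ Finset.univ) => hx x)
    rw [Finset.sum_sub_distrib, Finset.sum_add_distrib] at this
    exact this
  have hfib : ∀ C : D → S, ∑ x, μ (C x) = ∑ s, (occ C s : ℤ) * μ s := by
    intro C
    rw [← Finset.sum_fiberwise' Finset.univ C (fun s => μ s)]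
    apply Finset.sum_congr rfl
    intro s _
    rw [Finset.sum_const, occ, nsmul_eq_mul]
  -- per-center inequality
  have hs : ∀ s, (if s = sj then w else 0) + (occ A s : ℤ) * μ s
        + (∑ j ∈ Finset.Icc 1 (occ A s), p s j)
      ≤ (occ B s : ℤ) * μ s + ∑ j ∈ Finset.Icc 1 (occ B s), p s j := by
    intro s
    set m := occ A s with hm
    set n := occ B s with hn
    have hite : (if s = sj then w else 0) ≤ 0 := by
      by_cases h : s = sj
      · rw [if_pos h]; exact hw0
      · rw [if_neg h]
    rcases Nat.lt_or_ge m n with hmn | hmn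
    · -- m < n
      have hKcast : ((n - m : ℕ) : ℤ) = (n : ℤ) - (m : ℤ) := by
        push_cast [Nat.cast_sub (le_of_lt hmn)]
        ring
      have hQ : ∑ j ∈ Finset.Icc 1 n, p s j
          = (∑ j ∈ Finset.Icc 1 m, p s j) + ∑ j ∈ Finset.Ioc m n, p s j :=
        Q_diff p s m n (le_of_lt hmn)
      by_cases hsj : s = sj
      · subst hsj
        have hstep := sum_Ioc_step p s m n hmn
        have hge := sum_Ioc_ge p hmono s (m + 1) n hmn
        have hK1 : ((n - (m + 1) : ℕ) : ℤ) = (n : ℤ) - (m : ℤ) - 1 := by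
          push_cast [Nat.cast_sub (by omega : m + 1 ≤ n)]
          ring
        have hK1nn : (0 : ℤ) ≤ (n : ℤ) - (m : ℤ) - 1 := by omega
        have hprod : 0 ≤ ((n : ℤ) - (m : ℤ) - 1) * (p s (m + 2) + μ s) :=
          mul_nonneg hK1nn (by rw [hm]; exact hM2c)
        rw [if_pos rfl, hQ, hstep]
        rw [hK1] at hge
        have hb := hM2b
        rw [← hm] at hb
        nlinarith [hge, hprod, hb]
      · have hge := sum_Ioc_ge p hmono s m n (le_of_lt hmn)
        have hprod : 0 ≤ ((n : ℤ) - (m : ℤ)) * (p s (m + 1) + μ s) :=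
          mul_nonneg (by omega) (by rw [hm]; exact hM2 s hsj)
        rw [if_neg hsj, hQ]
        rw [hKcast] at hge
        nlinarith [hge, hprod]
    · -- n ≤ m
      have hQ : ∑ j ∈ Finset.Icc 1 m, p s j
          = (∑ j ∈ Finset.Icc 1 n, p s j) + ∑ j ∈ Finset.Ioc n m, p s j :=
        Q_diff p s n m hmn
      have hle := sum_Ioc_le p hmono s n m hmn
      have hKcast : ((m - n : ℕ) : ℤ) = (m : ℤ) - (n : ℤ) := by
        push_cast [Nat.cast_sub hmn]
        ring
      have hprod : 0 ≤ ((m : ℤ) - (n : ℤ)) * (- p s m - μ s) :=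
        mul_nonneg (by omega) (by have := hM1 s; rw [← hm] at this; linarith)
      rw [hQ]
      rw [hKcast] at hle
      nlinarith [hle, hprod, hite]
  have hsumS := Finset.sum_le_sum (fun s (_ : s ∈ Finset.univ) => hs s)
  simp only [Finset.sum_add_distrib] at hsumS
  rw [Finset.sum_ite_eq' Finset.univ sj] at hsumS
  simp only [Finset.mem_univ, if_pos] at hsumS
  rw [cost, cost]
  have hfibA := hfib A
  have hfibB := hfib B
  linarith
end Assembly


section Core
variable {D S : Type*} [Fintype D] [DecidableEq D] [Fintype S] [DecidableEq S]

lemma core (CM : D → S → ℤ) (p : S → ℕ → ℤ) (hmono : ∀ s, Monotone (p s))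
    (A1 : D → S) (d : D) (sj : S) (hd : A1 d = sj)
    (hA1 : ¬ InducesNegLoop CM p A1) (w : ℤ) (hw0 : w ≤ 0)
    (hw : ∀ L : Loop S {x : D // x ≠ d}, IsLoop (fun x : {x : D // x ≠ d} => A1 x.1) L →
        (∃ t, L.dem t = none ∧ L.vtx t = sj) →
        w ≤ loopCost (fun (x : {x : D // x ≠ d}) s => CM x.1 s) p
          (fun x : {x : D // x ≠ d} => A1 x.1) L)
    (B : {x : D // x ≠ d} → S) :
    cost (fun (x : {x : D // x ≠ d}) s => CM x.1 s) p (fun x : {x : D // x ≠ d} => A1 x.1) + w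
      ≤ cost (fun (x : {x : D // x ≠ d}) s => CM x.1 s) p B := by
  classical
  have hC0 : ∀ (a : S) (l : List S), (a :: l).Nodup →
      (∀ b ∈ a :: l, (Finset.univ.filter fun x : {x : D // x ≠ d} =>
        (fun x : {x : D // x ≠ d} => A1 x.1) x = b).Nonempty) →
      0 ≤ wT (fun (x : {x : D // x ≠ d}) s => CM x.1 s) (fun x : {x : D // x ≠ d} => A1 x.1) a l
        + Tw (fun (x : {x : D // x ≠ d}) s => CM x.1 s) (fun x : {x : D // x ≠ d} => A1 x.1)
            (lastV a l) a := by
    intro a l hnd hocc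
    cases l with
    | nil =>
      have h0 : wT (fun (x : {x : D // x ≠ d}) s => CM x.1 s)
          (fun x : {x : D // x ≠ d} => A1 x.1) a [] = 0 := rfl
      rw [h0, lastV, zero_add]
      exact Tw_self _ _ (hocc a (List.mem_cons_self (a := a) (l := [])))
    | cons b l' =>
      obtain ⟨L, hL, hnp, hcost⟩ := exists_cycle_loop
        (fun (x : {x : D // x ≠ d}) s => CM x.1 s) p (fun x : {x : D // x ≠ d} => A1 x.1)
        a (b :: l') hnd (by simp) hocc
      have := pf_nopen CM p A1 d hA1 hL hnp
      rw [hcost] at this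
      exact this
  have hocc_of : ∀ (a : S) (l : List S),
      (∀ b ∈ (a :: l).dropLast, (Finset.univ.filter fun x : {x : D // x ≠ d} =>
        (fun x : {x : D // x ≠ d} => A1 x.1) x = b).Nonempty) →
      ∀ n : ℕ, n < l.length → (Finset.univ.filter fun x : {x : D // x ≠ d} =>
        (fun x : {x : D // x ≠ d} => A1 x.1) x = nthV a l n).Nonempty := by
    intro a l hok n hn
    exact hok _ (nthV_mem_dropLast a l hn)
  have hC1 : ∀ (a : S) (l : List S), (a :: l).Nodup →
      (∀ b ∈ (a :: l).dropLast, (Finset.univ.filter fun x : {x : D // x ≠ d} =>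
        (fun x : {x : D // x ≠ d} => A1 x.1) x = b).Nonempty) →
      lastV a l ≠ sj →
      0 ≤ wT (fun (x : {x : D // x ≠ d}) s => CM x.1 s) (fun x : {x : D // x ≠ d} => A1 x.1) a l
        + p (lastV a l) (occ (fun x : {x : D // x ≠ d} => A1 x.1) (lastV a l) + 1)
        - p a (occ (fun x : {x : D // x ≠ d} => A1 x.1) a) := by
    intro a l hnd hok hlast
    cases l with
    | nil =>
      have h0 : wT (fun (x : {x : D // x ≠ d}) s => CM x.1 s)
          (fun x : {x : D // x ≠ d} => A1 x.1) a [] = 0 := rfl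
      rw [h0, lastV]
      have := hmono a (Nat.le_succ (occ (fun x : {x : D // x ≠ d} => A1 x.1) a))
      rw [lastV] at hlast
      linarith
    | cons b l' =>
      obtain ⟨L, hL, ⟨t0, ht0n, ht0v, hct0v⟩, hcost⟩ := exists_path_loop
        (fun (x : {x : D // x ≠ d}) s => CM x.1 s) p (fun x : {x : D // x ≠ d} => A1 x.1)
        a (b :: l') hnd (by simp) (hocc_of a (b :: l') hok)
      have := (pf_pen CM p A1 d sj hd hmono hA1 hL ht0n).1 (by rw [ht0v]; exact hlast)
      rw [hcost, wpen] at this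
      linarith
  have hC2 : ∀ (a : S) (l : List S), (a :: l).Nodup →
      (∀ b ∈ (a :: l).dropLast, (Finset.univ.filter fun x : {x : D // x ≠ d} =>
        (fun x : {x : D // x ≠ d} => A1 x.1) x = b).Nonempty) →
      lastV a l = sj →
      w ≤ wT (fun (x : {x : D // x ≠ d}) s => CM x.1 s) (fun x : {x : D // x ≠ d} => A1 x.1) a l
        + p sj (occ (fun x : {x : D // x ≠ d} => A1 x.1) sj + 1)
        - p a (occ (fun x : {x : D // x ≠ d} => A1 x.1) a) := by
    intro a l hnd hok hlast
    cases l with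
    | nil =>
      have h0 : wT (fun (x : {x : D // x ≠ d}) s => CM x.1 s)
          (fun x : {x : D // x ≠ d} => A1 x.1) a [] = 0 := rfl
      rw [lastV] at hlast
      subst hlast
      have := hmono a (Nat.le_succ (occ (fun x : {x : D // x ≠ d} => A1 x.1) a))
      rw [h0]
      linarith
    | cons b l' =>
      obtain ⟨L, hL, ⟨t0, ht0n, ht0v, hct0v⟩, hcost⟩ := exists_path_loop
        (fun (x : {x : D // x ≠ d}) s => CM x.1 s) p (fun x : {x : D // x ≠ d} => A1 x.1)
        a (b :: l') hnd (by simp) (hocc_of a (b :: l') hok)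
      have := hw L hL ⟨t0, ht0n, by rw [ht0v]; exact hlast⟩
      rw [hcost, wpen] at this
      rw [← hlast]
      linarith
  have hC3 : ∀ (a : S) (l : List S), (a :: l).Nodup →
      (∀ b ∈ (a :: l).dropLast, (Finset.univ.filter fun x : {x : D // x ≠ d} =>
        (fun x : {x : D // x ≠ d} => A1 x.1) x = b).Nonempty) →
      lastV a l = sj →
      0 ≤ wT (fun (x : {x : D // x ≠ d}) s => CM x.1 s) (fun x : {x : D // x ≠ d} => A1 x.1) a l
        + p sj (occ (fun x : {x : D // x ≠ d} => A1 x.1) sj + 2)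
        - p a (occ (fun x : {x : D // x ≠ d} => A1 x.1) a) := by
    intro a l hnd hok hlast
    cases l with
    | nil =>
      have h0 : wT (fun (x : {x : D // x ≠ d}) s => CM x.1 s)
          (fun x : {x : D // x ≠ d} => A1 x.1) a [] = 0 := rfl
      rw [lastV] at hlast
      subst hlast
      have := hmono a (by omega : occ (fun x : {x : D // x ≠ d} => A1 x.1) a
        ≤ occ (fun x : {x : D // x ≠ d} => A1 x.1) a + 2)
      rw [h0]
      linarith
    | cons b l' =>
      obtain ⟨L, hL, ⟨t0, ht0n, ht0v, hct0v⟩, hcost⟩ := exists_path_loop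
        (fun (x : {x : D // x ≠ d}) s => CM x.1 s) p (fun x : {x : D // x ≠ d} => A1 x.1)
        a (b :: l') hnd (by simp) (hocc_of a (b :: l') hok)
      have := (pf_pen CM p A1 d sj hd hmono hA1 hL ht0n).2 (by rw [ht0v]; exact hlast)
      rw [hcost, wpen, hlast] at this
      linarith
  obtain ⟨μ, hM1, hM2, hM2b, hM2c, hM3⟩ := mu_exists
    (fun (x : {x : D // x ≠ d}) s => CM x.1 s) (fun x : {x : D // x ≠ d} => A1 x.1)
    p sj w hC0 hC1 hC2 hC3
  exact cost_lower (fun (x : {x : D // x ≠ d}) s => CM x.1 s)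
    (fun x : {x : D // x ≠ d} => A1 x.1) p sj w hw0 hmono μ hM1 hM2 hM2b hM2c hM3 B

end Core


/-- let `A1` induce no negative loop and let `d` be a demand unit
with `A1 d = sj`.  Let `A2` be the restriction of `A1` to `D ∖ {d}` (modelled by
the subtype `{x : D // x ≠ d}`).
(a) If every loop of `A2` containing a penalty transfer edge directed out of
`sj` has nonnegative cost, then `A2` induces no negative loop.
(b) If `Cmin` is such a loop of minimum cost and its cost is negative, then
removing `Cmin` yields an allotment inducing no negative loop. -/
theorem restore_optimality_after_deletion
    (D S : Type) [Fintype D] [DecidableEq D] [Fintype S] [DecidableEq S]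
    (CM : D → S → ℤ) (c : S → ℕ) (p : S → ℕ → ℤ)
    (hp0 : ∀ s j, j ≤ c s → p s j = 0)
    (hppos : ∀ s j, c s < j → 0 < p s j)
    (hpmono : ∀ s j, c s < j → p s j ≤ p s (j + 1))
    (A1 : D → S) (d : D) (sj : S) (hd : A1 d = sj)
    (hA1 : ¬ InducesNegLoop CM p A1) :
    ((∀ L : Loop S {x : D // x ≠ d}, IsLoop (fun x : {x : D // x ≠ d} => A1 x.1) L →
        (∃ t, L.dem t = none ∧ L.vtx t = sj) →
        0 ≤ loopCost (fun (x : {x : D // x ≠ d}) s => CM x.1 s) p (fun x : {x : D // x ≠ d} => A1 x.1) L) →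
      ¬ InducesNegLoop (fun (x : {x : D // x ≠ d}) s => CM x.1 s) p (fun x : {x : D // x ≠ d} => A1 x.1)) ∧
    (∀ Cmin : Loop S {x : D // x ≠ d}, IsLoop (fun x : {x : D // x ≠ d} => A1 x.1) Cmin →
        (∃ t, Cmin.dem t = none ∧ Cmin.vtx t = sj) →
        (∀ L : Loop S {x : D // x ≠ d}, IsLoop (fun x : {x : D // x ≠ d} => A1 x.1) L →
          (∃ t, L.dem t = none ∧ L.vtx t = sj) →
          loopCost (fun (x : {x : D // x ≠ d}) s => CM x.1 s) p (fun x : {x : D // x ≠ d} => A1 x.1) Cmin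
            ≤ loopCost (fun (x : {x : D // x ≠ d}) s => CM x.1 s) p (fun x : {x : D // x ≠ d} => A1 x.1) L) →
        loopCost (fun (x : {x : D // x ≠ d}) s => CM x.1 s) p (fun x : {x : D // x ≠ d} => A1 x.1) Cmin < 0 →
        ¬ InducesNegLoop (fun (x : {x : D // x ≠ d}) s => CM x.1 s) p
            (removeLoop (fun x : {x : D // x ≠ d} => A1 x.1) Cmin)) := by
  classical
  have hmono : ∀ s, Monotone (p s) := pMonotone hp0 hppos hpmono
  constructor
  · rintro hloops ⟨L, hL, hneg⟩
    have hrm := cost_removeLoop (fun (x : {x : D // x ≠ d}) s => CM x.1 s) p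
      (fun x : {x : D // x ≠ d} => A1 x.1) L hL
    have hcore := core CM p hmono A1 d sj hd hA1 0 le_rfl
      (fun L hL hex => hloops L hL hex)
      (removeLoop (fun x : {x : D // x ≠ d} => A1 x.1) L)
    linarith
  · rintro Cmin hCmin hex hmin hneg ⟨L, hL3, hneg3⟩
    have hrmC := cost_removeLoop (fun (x : {x : D // x ≠ d}) s => CM x.1 s) p
      (fun x : {x : D // x ≠ d} => A1 x.1) Cmin hCmin
    have hrmL := cost_removeLoop (fun (x : {x : D // x ≠ d}) s => CM x.1 s) p
      (removeLoop (fun x : {x : D // x ≠ d} => A1 x.1) Cmin) L hL3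
    have hcore := core CM p hmono A1 d sj hd hA1
      (loopCost (fun (x : {x : D // x ≠ d}) s => CM x.1 s) p
        (fun x : {x : D // x ≠ d} => A1 x.1) Cmin)
      (le_of_lt hneg) hmin
      (removeLoop (removeLoop (fun x : {x : D // x ≠ d} => A1 x.1) Cmin) L)
    linarith
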